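/- Let H be a directed hypergraph in which every hyperedge has at least one tail-vertex, and such that whenever two hyperedges H_1, H_2 intersect in exactly one vertex v, then v is a head-vertex of both H_1 and H_2. Then H admits a proper 2-coloring. -/
import Mathlib


/-- A directed hypergraph (each hyperedge is a pair `(tail, head)` of disjoint finsets)
in which every hyperedge has at least one tail-vertex and in which, whenever two
hyperedges intersect in exactly one vertex `v`, the vertex `v` is a head-vertex of
both, admits a proper 2-coloring. -/
theorem stmt3 {V : Type*} [Fintype V] [DecidableEq V]
    (E : Finset (Finset V × Finset V))
    (hdisj : ∀ e ∈ E, Disjoint e.1 e.2)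
    (htail : ∀ e ∈ E, e.1.Nonempty)
    (hint : ∀ e₁ ∈ E, ∀ e₂ ∈ E, ∀ v : V,
      (e₁.1 ∪ e₁.2) ∩ (e₂.1 ∪ e₂.2) = {v} → v ∈ e₁.2 ∧ v ∈ e₂.2) :
    ∃ f : V → Bool, ∀ e ∈ E, ∃ u ∈ e.1 ∪ e.2, ∃ w ∈ e.1 ∪ e.2, f u ≠ f w := by
  classical
  obtain ⟨f, -, hf⟩ := Finset.exists_min_image (Finset.univ : Finset (V → Bool))
    (fun c => (E.filter (fun e : Finset V × Finset V =>
      ∀ u ∈ e.1 ∪ e.2, ∀ w ∈ e.1 ∪ e.2, c u = c w)).card)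
    ⟨fun _ => true, Finset.mem_univ _⟩
  refine ⟨f, ?_⟩
  by_contra h
  push_neg at h
  obtain ⟨e, heE, hmono⟩ := h
  obtain ⟨v, hv⟩ := htail e heE
  have hvmem : v ∈ e.1 ∪ e.2 := Finset.mem_union_left _ hv
  set g : V → Bool := Function.update f v (!f v) with hg
  -- key: any edge mono under g does not contain v
  have key : ∀ e' ∈ E, (∀ u ∈ e'.1 ∪ e'.2, ∀ w ∈ e'.1 ∪ e'.2, g u = g w) →
      v ∉ e'.1 ∪ e'.2 := by
    intro e' he' hm hvmem'
    have hinter : (e'.1 ∪ e'.2) ∩ (e.1 ∪ e.2) = {v} := by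
      apply Finset.eq_singleton_iff_unique_mem.mpr
      refine ⟨Finset.mem_inter.mpr ⟨hvmem', hvmem⟩, ?_⟩
      intro w hw
      by_contra hwv
      obtain ⟨hw1, hw2⟩ := Finset.mem_inter.mp hw
      have h1 : g w = g v := hm w hw1 v hvmem'
      have h2 : f w = f v := hmono w hw2 v hvmem
      have h3 : g w = f w := Function.update_of_ne hwv _ _
      have h4 : g v = !f v := Function.update_self _ _ _
      rw [h3, h2, h4] at h1
      exact (Bool.not_ne_self (f v)) h1.symm
    obtain ⟨_, hv2⟩ := hint e' he' e heE v hinter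
    exact (Finset.disjoint_left.mp (hdisj e heE) hv) hv2
  have hss : (E.filter (fun e => ∀ u ∈ e.1 ∪ e.2, ∀ w ∈ e.1 ∪ e.2, g u = g w)) ⊂
      (E.filter (fun e => ∀ u ∈ e.1 ∪ e.2, ∀ w ∈ e.1 ∪ e.2, f u = f w)) := by
    constructor
    · intro e' he'
      rw [Finset.mem_filter] at he' ⊢
      obtain ⟨he'E, hm⟩ := he'
      refine ⟨he'E, fun u hu w hw => ?_⟩
      have hnv := key e' he'E hm
      have hu' : u ≠ v := fun hh => hnv (hh ▸ hu)
      have hw' : w ≠ v := fun hh => hnv (hh ▸ hw)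
      have := hm u hu w hw
      rwa [hg, Function.update_of_ne hu', Function.update_of_ne hw'] at this
    · intro hsub
      have he_mem : e ∈ E.filter (fun e => ∀ u ∈ e.1 ∪ e.2, ∀ w ∈ e.1 ∪ e.2, f u = f w) :=
        Finset.mem_filter.mpr ⟨heE, hmono⟩
      have hmem2 := Finset.mem_filter.mp (hsub he_mem)
      exact key e heE hmem2.2 hvmem
  have hle := hf g (Finset.mem_univ _)
  have hc := Finset.card_lt_card hss
  omega
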